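/- The maximum size of a set of mutually unbiased weighing matrices of order 7 and weight 4 is 8; that is, there exist 8 pairwise unbiased weighing matrices of order 7 and weight 4, and there do not exist 9 pairwise unbiased weighing matrices of order 7 and weight 4. -/

import Mathlib

open Matrix

/-- `W` is a weighing matrix of order `d` and weight `k`: a `d × d` real matrix with all
entries in `{-1, 0, 1}` such that `W * Wᵀ = k • 1`. -/
def IsWeighing {d : ℕ} (k : ℝ) (W : Matrix (Fin d) (Fin d) ℝ) : Prop :=
  (∀ i j, W i j = -1 ∨ W i j = 0 ∨ W i j = 1) ∧
    W * Wᵀ = k • (1 : Matrix (Fin d) (Fin d) ℝ)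

/-- A family of mutually unbiased weighing matrices of order `d` and weight `k`:
each member is a weighing matrix of weight `k`, and for distinct members
`(1/√k) • (Wᵢ * Wⱼᵀ)` is again a weighing matrix of weight `k`. -/
def MUWM {d f : ℕ} (k : ℝ) (W : Fin f → Matrix (Fin d) (Fin d) ℝ) : Prop :=
  (∀ i, IsWeighing k (W i)) ∧
    ∀ i j, i ≠ j → IsWeighing k ((Real.sqrt k)⁻¹ • (W i * (W j)ᵀ))

/-- A family of mutually quasi-unbiased weighing matrices for parameters `(d, k, l, a)`:
each member is a weighing matrix of weight `k`, and for distinct members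
`(1/√a) • (Wᵢ * Wⱼᵀ)` is a weighing matrix of weight `l`. -/
def MQUWM {d f : ℕ} (k l a : ℝ) (W : Fin f → Matrix (Fin d) (Fin d) ℝ) : Prop :=
  (∀ i, IsWeighing k (W i)) ∧
    ∀ i j, i ≠ j → IsWeighing l ((Real.sqrt a)⁻¹ • (W i * (W j)ᵀ))


section StmtAux

open Matrix Finset

lemma sqrt4 : Real.sqrt 4 = 2 := by
  rw [show (4:ℝ) = 2^2 by norm_num, Real.sqrt_sq (by norm_num : (0:ℝ) ≤ 2)]



abbrev V2 := Fin 7 → ZMod 2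

noncomputable def B2 : LinearMap.BilinForm (ZMod 2) V2 := Matrix.toBilin' 1

lemma B2_apply (v w : V2) : B2 v w = ∑ j, v j * w j := by
  simp [B2, Matrix.toBilin'_apply', dotProduct]

lemma B2_refl : B2.IsRefl := by
  intro x y h
  rw [B2_apply] at h ⊢
  simpa [mul_comm] using h

lemma B2_nondeg : B2.Nondegenerate := by
  constructor <;> intro v hv <;> funext j
  · have := hv (Pi.single j 1)
    rw [B2_apply] at this
    simpa [Pi.single_apply, Finset.sum_ite_eq'] using this
  · have := hv (Pi.single j 1)
    rw [B2_apply] at this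
    simpa [Pi.single_apply, Finset.sum_ite_eq, Finset.sum_ite_eq'] using this

/-- A finset of nonzero, pairwise (and self) orthogonal vectors in `F₂⁷` has at most 7 elems. -/
lemma isotropic_card_le (T : Finset V2) (h0 : (0 : V2) ∉ T)
    (horth : ∀ x ∈ T, ∀ y ∈ T, ∑ j, x j * y j = 0) : T.card ≤ 7 := by
  classical
  set U : Submodule (ZMod 2) V2 := Submodule.span (ZMod 2) ↑T with hU
  have hTU : ∀ x ∈ T, x ∈ U := fun x hx => Submodule.subset_span hx
  have key : ∀ x ∈ U, ∀ y ∈ U, B2 x y = 0 := by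
    intro x hx
    induction hx using Submodule.span_induction with
    | mem z hz =>
        intro y hy
        induction hy using Submodule.span_induction with
        | mem w hw => rw [B2_apply]; exact horth z hz w hw
        | zero => simp
        | add a b _ _ ha hb => simp [map_add, ha, hb]
        | smul c a _ ha => simp [_root_.map_smul, ha]
    | zero => intro y hy; simp
    | add a b _ _ ha hb => intro y hy; simp [map_add, LinearMap.add_apply, ha y hy, hb y hy]
    | smul c a _ ha => intro y hy; simp [_root_.map_smul, LinearMap.smul_apply, ha y hy]
  -- U is totally isotropic
  have hiso : U ≤ B2.orthogonal U := by
    intro x hx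
    rw [LinearMap.BilinForm.mem_orthogonal_iff]
    intro y hy
    exact key y hy x hx
  -- dimension bound
  have hdim := LinearMap.BilinForm.finrank_orthogonal B2_nondeg U
  have hle : Module.finrank (ZMod 2) U ≤ Module.finrank (ZMod 2) ↥(B2.orthogonal U) :=
    Submodule.finrank_mono hiso
  have hV : Module.finrank (ZMod 2) V2 = 7 := by simp
  have hU3 : Module.finrank (ZMod 2) U ≤ 3 := by omega
  -- cardinality of U
  have : Fintype ↥U := Fintype.ofFinite _
  have hcard : Fintype.card ↥U = 2 ^ Module.finrank (ZMod 2) ↥U := by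
    have := Module.card_eq_pow_finrank (K := ZMod 2) (V := ↥U)
    simpa using this
  have hcardle : Fintype.card ↥U ≤ 8 := by
    rw [hcard]
    calc (2:ℕ) ^ Module.finrank (ZMod 2) ↥U ≤ 2 ^ 3 := Nat.pow_le_pow_right (by norm_num) hU3
    _ = 8 := by norm_num
  -- embed T into U \ {0}
  have hinj : Function.Injective (fun x : {x // x ∈ T} => (⟨x.1, hTU x.1 x.2⟩ : ↥U)) := by
    intro a b hab
    have : (a.1 : V2) = b.1 := congrArg (Subtype.val : ↥U → V2) hab
    exact Subtype.ext this
  have : T.card ≤ Fintype.card ↥U - 1 := by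
    have h1 : (T.attach.image (fun x : {x // x ∈ T} => (⟨x.1, hTU x.1 x.2⟩ : ↥U))).card
        = T.card := by
      rw [Finset.card_image_of_injective _ hinj, Finset.card_attach]
    have h2 : (T.attach.image (fun x : {x // x ∈ T} => (⟨x.1, hTU x.1 x.2⟩ : ↥U)))
        ⊆ Finset.univ.erase (0 : ↥U) := by
      intro u hu
      simp only [Finset.mem_image] at hu
      obtain ⟨x, _, rfl⟩ := hu
      apply Finset.mem_erase.mpr
      refine ⟨?_, Finset.mem_univ _⟩
      intro h
      apply h0
      have hx0 : (x.1 : V2) = 0 := congrArg Subtype.val h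
      have := x.2
      rwa [hx0] at this
    calc T.card = _ := h1.symm
    _ ≤ (Finset.univ.erase (0 : ↥U)).card := Finset.card_le_card h2
    _ = Fintype.card ↥U - 1 := by rw [Finset.card_erase_of_mem (Finset.mem_univ _), Finset.card_univ]
  omega


theorem no_nine : ¬∃ W : Fin 9 → Matrix (Fin 7) (Fin 7) ℝ, MUWM (4 : ℝ) W := by
  classical
  rintro ⟨W, hw, hub⟩
  -- integer version of the rows
  set u : Fin 9 × Fin 7 → Fin 7 → ℤ :=
    fun p j => if W p.1 p.2 j = 1 then 1 else if W p.1 p.2 j = -1 then -1 else 0 with hu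
  have hu1 : ∀ p j, u p j = -1 ∨ u p j = 0 ∨ u p j = 1 := by
    intro p j
    rcases (hw p.1).1 p.2 j with h|h|h <;> norm_num [hu, h]
  have hcast : ∀ p j, ((u p j : ℤ) : ℝ) = W p.1 p.2 j := by
    intro p j
    rcases (hw p.1).1 p.2 j with h|h|h <;> norm_num [hu, h]
  set D : Fin 9 × Fin 7 → Fin 9 × Fin 7 → ℤ := fun p q => ∑ j, u p j * u q j with hD
  have hDcast : ∀ p q, ((D p q : ℤ) : ℝ) = ∑ j, W p.1 p.2 j * W q.1 q.2 j := by
    intro p q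
    push_cast [hD]
    exact Finset.sum_congr rfl fun j _ => by rw [hcast, hcast]
  have hWW : ∀ i : Fin 9, ∀ r s : Fin 7,
      ∑ j, W i r j * W i s j = if r = s then (4:ℝ) else 0 := by
    intro i r s
    have h2 := (hw i).2
    have := congrFun (congrFun h2 r) s
    simpa [Matrix.mul_apply, Matrix.one_apply] using this
  have hDself : ∀ p, D p p = 4 := by
    intro p
    have : ((D p p : ℤ) : ℝ) = 4 := by rw [hDcast]; simpa using hWW p.1 p.2 p.2
    exact_mod_cast this
  have hDorth : ∀ p q, p.1 = q.1 → p.2 ≠ q.2 → D p q = 0 := by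
    intro p q h1 h2
    have : ((D p q : ℤ) : ℝ) = 0 := by
      rw [hDcast, h1]; simpa [h2] using hWW q.1 p.2 q.2
    exact_mod_cast this
  have hDcross : ∀ p q, p.1 ≠ q.1 → D p q = -2 ∨ D p q = 0 ∨ D p q = 2 := by
    intro p q h1
    have hiw := hub p.1 q.1 h1
    have hent := hiw.1 p.2 q.2
    have hsmul : ((Real.sqrt 4)⁻¹ • (W p.1 * (W q.1)ᵀ)) p.2 q.2
        = (2:ℝ)⁻¹ * ∑ j, W p.1 p.2 j * W q.1 q.2 j := by
      simp [sqrt4, Matrix.mul_apply]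
    rw [hsmul] at hent
    have h2 : ((D p q : ℤ) : ℝ) = -2 ∨ ((D p q : ℤ) : ℝ) = 0 ∨ ((D p q : ℤ) : ℝ) = 2 := by
      rw [hDcast]
      rcases hent with h|h|h
      · left; linarith
      · right; left; linarith
      · right; right; linarith
    rcases h2 with h|h|h
    · left; exact_mod_cast h
    · right; left; exact_mod_cast h
    · right; right; exact_mod_cast h
  -- parity: characteristic vectors mod 2
  set χ : Fin 9 × Fin 7 → (Fin 7 → ZMod 2) := fun p j => ((u p j : ℤ) : ZMod 2) with hχ
  have hchidot : ∀ p q, ∑ j, χ p j * χ q j = ((D p q : ℤ) : ZMod 2) := by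
    intro p q
    rw [hD]
    push_cast
    rfl
  have hDeven : ∀ p q, p ≠ q → D p q = -2 ∨ D p q = 0 ∨ D p q = 2 := by
    intro p q hpq
    by_cases h1 : p.1 = q.1
    · right; left
      apply hDorth p q h1
      intro h2
      exact hpq (Prod.ext h1 h2)
    · exact hDcross p q h1
  have hchiorth : ∀ p q, ∑ j, χ p j * χ q j = 0 := by
    intro p q
    rw [hchidot]
    by_cases hpq : p = q
    · rw [hpq, hDself]; decide
    · rcases hDeven p q hpq with h|h|h <;> rw [h] <;> decide
  have hchine : ∀ p, χ p ≠ 0 := by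
    intro p hp0
    have : D p p = 4 := hDself p
    have hz : ∀ j, u p j = 0 := by
      intro j
      have hj : ((u p j : ℤ) : ZMod 2) = 0 := by
        have : χ p j = 0 := by rw [hp0]; rfl
        simpa [hχ] using this
      rcases hu1 p j with h|h|h
      · exfalso; rw [h] at hj; revert hj; decide
      · exact h
      · exfalso; rw [h] at hj; revert hj; decide
    rw [hD] at this
    simp only [hz, mul_zero, Finset.sum_const_zero] at this
    exact absurd this (by decide)
  -- the set of supports as F₂ vectors
  set T : Finset (Fin 7 → ZMod 2) := Finset.image χ Finset.univ with hT
  have hTcard : T.card ≤ 7 := by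
    apply isotropic_card_le
    · intro h0
      rw [hT, Finset.mem_image] at h0
      obtain ⟨p, _, hp⟩ := h0
      exact hchine p hp
    · intro x hx y hy
      rw [hT, Finset.mem_image] at hx hy
      obtain ⟨p, _, rfl⟩ := hx
      obtain ⟨q, _, rfl⟩ := hy
      exact hchiorth p q
  -- pigeonhole: some χ-fiber has ≥ 9 elements
  have hmaps : ∀ p : Fin 9 × Fin 7, p ∈ (Finset.univ : Finset (Fin 9 × Fin 7)) → χ p ∈ T := by
    intro p _
    rw [hT, Finset.mem_image]
    exact ⟨p, Finset.mem_univ p, rfl⟩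
  have hcount : T.card * 8 < (Finset.univ : Finset (Fin 9 × Fin 7)).card := by
    have : (Finset.univ : Finset (Fin 9 × Fin 7)).card = 63 := by decide
    omega
  obtain ⟨t, htT, hFcard⟩ :=
    Finset.exists_lt_card_fiber_of_mul_lt_card_of_maps_to hmaps hcount
  set F : Finset (Fin 9 × Fin 7) := Finset.univ.filter (fun p => χ p = t) with hF
  -- all elements of F share the same support P
  have hFne : F.Nonempty := Finset.card_pos.mp (by omega)
  obtain ⟨p₀, hp₀⟩ := hFne
  have hne0 : ∀ p j, u p j ≠ 0 ↔ χ p j ≠ 0 := by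
    intro p j
    rcases hu1 p j with h|h|h <;> simp [hχ, h] <;> decide
  set P : Finset (Fin 7) := Finset.univ.filter (fun j => u p₀ j ≠ 0) with hP
  have hchiF : ∀ p ∈ F, χ p = t := by
    intro p hp
    exact (Finset.mem_filter.mp hp).2
  have hsupp : ∀ p ∈ F, ∀ j, u p j ≠ 0 ↔ j ∈ P := by
    intro p hp j
    rw [hne0, hchiF p hp, hP, Finset.mem_filter]
    rw [hne0, hchiF p₀ hp₀]
    simp
  have hsum4 : ∀ p, (∑ j, u p j * u p j) = 4 := hDself
  have hPcard : P.card = 4 := by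
    have h4 := hDself p₀
    simp only [hD] at h4
    have heq : ∀ j : Fin 7, u p₀ j * u p₀ j = if u p₀ j ≠ 0 then 1 else 0 := by
      intro j
      rcases hu1 p₀ j with h|h|h <;> simp [h]
    rw [Finset.sum_congr rfl (fun j _ => heq j), Finset.sum_boole] at h4
    have : (P.card : ℤ) = 4 := by rw [hP]; exact_mod_cast h4
    exact_mod_cast this
  have hPne : P.Nonempty := by
    apply Finset.card_pos.mp; omega
  set j0 : Fin 7 := P.min' hPne with hj0
  have hj0P : j0 ∈ P := P.min'_mem hPne
  set N : Fin 9 × Fin 7 → Finset (Fin 7) :=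
    fun p => Finset.univ.filter (fun j => u p j = u p j0) with hN
  have hsgn : ∀ p ∈ F, ∀ j ∈ P, u p j = -1 ∨ u p j = 1 := by
    intro p hp j hj
    have : u p j ≠ 0 := (hsupp p hp j).mpr hj
    rcases hu1 p j with h|h|h
    · left; exact h
    · exact absurd h this
    · right; exact h
  have hinjN : ∀ p ∈ F, ∀ q ∈ F, N p = N q → p = q := by
    intro p hp q hq hNpq
    by_contra hpq
    have hc : ∀ j : Fin 7, u p j * u q j = if j ∈ P then u p j0 * u q j0 else 0 := by
      intro j
      by_cases hjP : j ∈ P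
      · simp only [hjP, if_pos]
        have hiff : u p j = u p j0 ↔ u q j = u q j0 := by
          constructor
          · intro h
            have : j ∈ N p := by rw [hN]; simp [h]
            rw [hNpq] at this
            rw [hN] at this; simpa using this
          · intro h
            have : j ∈ N q := by rw [hN]; simp [h]
            rw [← hNpq] at this
            rw [hN] at this; simpa using this
        rcases hsgn p hp j hjP with h1|h1 <;>
        rcases hsgn q hq j hjP with h2|h2 <;>
        rcases hsgn p hp j0 hj0P with h3|h3 <;>
        rcases hsgn q hq j0 hj0P with h4|h4 <;>
        rw [h1, h2, h3, h4] at hiff ⊢ <;> omega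
      · have : u p j = 0 := by
          by_contra hne
          exact hjP ((hsupp p hp j).mp hne)
        rw [this, zero_mul, if_neg hjP]
    have hDval : D p q = 4 * (u p j0 * u q j0) := by
      simp only [hD]
      rw [Finset.sum_congr rfl (fun j _ => hc j)]
      rw [Finset.sum_ite_mem, Finset.univ_inter, Finset.sum_const, hPcard]
      push_cast
      ring
    have hval : u p j0 * u q j0 = -1 ∨ u p j0 * u q j0 = 1 := by
      rcases hsgn p hp j0 hj0P with h3|h3 <;>
      rcases hsgn q hq j0 hj0P with h4|h4 <;> rw [h3, h4] <;> norm_num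
    rcases hDeven p q hpq with h|h|h <;> rcases hval with hv|hv <;>
      rw [hv] at hDval <;> omega
  -- counting the fiber
  have himg : F.image N ⊆ ((P.erase j0).powerset).image (insert j0) := by
    intro s hs
    rw [Finset.mem_image] at hs
    obtain ⟨p, hp, rfl⟩ := hs
    have hj0N : j0 ∈ N p := by rw [hN]; simp
    have hNP : N p ⊆ P := by
      intro j hj
      rw [hN] at hj
      simp only [Finset.mem_filter, Finset.mem_univ, true_and] at hj
      apply (hsupp p hp j).mp
      rw [hj]
      exact (hsupp p hp j0).mpr hj0P
    rw [Finset.mem_image]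
    refine ⟨(N p).erase j0, ?_, Finset.insert_erase hj0N⟩
    rw [Finset.mem_powerset]
    exact Finset.erase_subset_erase _ hNP
  have hFle : F.card ≤ 8 := by
    have h1 : F.card = (F.image N).card :=
      (Finset.card_image_of_injOn (fun p hp q hq => hinjN p hp q hq)).symm
    have h2 : (F.image N).card ≤ (((P.erase j0).powerset).image (insert j0)).card :=
      Finset.card_le_card himg
    have h3 : (((P.erase j0).powerset).image (insert j0)).card ≤ ((P.erase j0).powerset).card :=
      Finset.card_image_le
    have h4 : ((P.erase j0).powerset).card = 2 ^ ((P.erase j0).card) :=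
      Finset.card_powerset _
    have h5 : (P.erase j0).card = 3 := by
      rw [Finset.card_erase_of_mem hj0P, hPcard]
    have h6 : ((P.erase j0).powerset).card = 8 := by rw [h4, h5]; norm_num
    omega
  omega


def Wz : Fin 8 → Matrix (Fin 7) (Fin 7) ℤ :=
  ![!![1, 1, 1, 0, 0, 0, 1;
    1, -1, 0, 1, 0, 1, 0;
    1, 0, -1, 0, 1, -1, 0;
    1, 0, 0, -1, -1, 0, -1;
    0, 1, -1, 1, -1, 0, 0;
    0, 1, 0, 0, 1, 1, -1;
    0, 0, 1, 1, 0, -1, -1],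
  !![1, 1, 1, 0, 0, 0, -1;
    1, -1, 0, 1, 0, -1, 0;
    1, 0, -1, 0, -1, 1, 0;
    1, 0, 0, -1, 1, 0, 1;
    0, 1, -1, 1, 1, 0, 0;
    0, 1, 0, 0, -1, -1, 1;
    0, 0, 1, 1, 0, 1, 1],
  !![1, 1, -1, 0, 0, 0, 1;
    1, -1, 0, -1, 0, -1, 0;
    1, 0, 1, 0, 1, 1, 0;
    1, 0, 0, 1, -1, 0, -1;
    0, 1, 1, -1, -1, 0, 0;
    0, 1, 0, 0, 1, -1, -1;
    0, 0, 1, 1, 0, -1, 1],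
  !![1, 1, -1, 0, 0, 0, -1;
    1, -1, 0, -1, 0, 1, 0;
    1, 0, 1, 0, -1, -1, 0;
    1, 0, 0, 1, 1, 0, 1;
    0, 1, 1, -1, 1, 0, 0;
    0, 1, 0, 0, -1, 1, 1;
    0, 0, 1, 1, 0, 1, -1],
  !![1, -1, 1, 0, 0, 0, 1;
    1, 1, 0, -1, 0, 1, 0;
    1, 0, -1, 0, -1, -1, 0;
    1, 0, 0, 1, 1, 0, -1;
    0, 1, 1, 1, -1, 0, 0;
    0, 1, 0, 0, 1, -1, 1;
    0, 0, 1, -1, 0, -1, -1],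
  !![1, -1, 1, 0, 0, 0, -1;
    1, 1, 0, -1, 0, -1, 0;
    1, 0, -1, 0, 1, 1, 0;
    1, 0, 0, 1, -1, 0, 1;
    0, 1, 1, 1, 1, 0, 0;
    0, 1, 0, 0, -1, 1, -1;
    0, 0, 1, -1, 0, 1, 1],
  !![1, -1, -1, 0, 0, 0, 1;
    1, 1, 0, 1, 0, -1, 0;
    1, 0, 1, 0, -1, 1, 0;
    1, 0, 0, -1, 1, 0, -1;
    0, 1, -1, -1, -1, 0, 0;
    0, 1, 0, 0, 1, 1, 1;
    0, 0, 1, -1, 0, -1, 1],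
  !![1, -1, -1, 0, 0, 0, -1;
    1, 1, 0, 1, 0, 1, 0;
    1, 0, 1, 0, 1, -1, 0;
    1, 0, 0, -1, -1, 0, 1;
    0, 1, -1, -1, 1, 0, 0;
    0, 1, 0, 0, -1, -1, -1;
    0, 0, 1, -1, 0, 1, -1]]

noncomputable def toR (A : Matrix (Fin 7) (Fin 7) ℤ) : Matrix (Fin 7) (Fin 7) ℝ :=
  A.map (Int.cast)

lemma toR_mulT (A B : Matrix (Fin 7) (Fin 7) ℤ) :
    toR A * (toR B)ᵀ = toR (A * Bᵀ) := by
  ext a b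
  simp [toR, Matrix.mul_apply, Matrix.map_apply]

lemma toR_weigh {A : Matrix (Fin 7) (Fin 7) ℤ} (h : A * Aᵀ = (4:ℤ) • 1) :
    toR A * (toR A)ᵀ = (4:ℝ) • 1 := by
  rw [toR_mulT, h]
  ext a b
  simp only [toR, Matrix.map_apply, Matrix.smul_apply, Matrix.one_apply]
  by_cases hab : a = b <;> simp [hab]

lemma transpose_weigh {M : Matrix (Fin 7) (Fin 7) ℝ} (h : M * Mᵀ = (4:ℝ) • 1) :
    Mᵀ * M = (4:ℝ) • 1 := by
  have h1 : M * ((4:ℝ)⁻¹ • Mᵀ) = 1 := by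
    rw [Matrix.mul_smul, h, smul_smul]
    norm_num
  have h2 := mul_eq_one_comm.mp h1
  rw [Matrix.smul_mul] at h2
  have := congrArg (fun X => (4:ℝ) • X) h2
  simpa [smul_smul] using this

lemma isWeighing_toR {A : Matrix (Fin 7) (Fin 7) ℤ}
    (h1 : ∀ a b, A a b = -1 ∨ A a b = 0 ∨ A a b = 1)
    (h2 : A * Aᵀ = (4:ℤ) • 1) : IsWeighing 4 (toR A) := by
  constructor
  · intro a b
    rcases h1 a b with h|h|h <;> simp [toR, Matrix.map_apply, h]
  · exact toR_weigh h2

lemma isWeighing_cross {A B : Matrix (Fin 7) (Fin 7) ℤ}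
    (hA : A * Aᵀ = (4:ℤ) • 1) (hB : B * Bᵀ = (4:ℤ) • 1)
    (hAB : ∀ a b, (A * Bᵀ) a b = -2 ∨ (A * Bᵀ) a b = 0 ∨ (A * Bᵀ) a b = 2) :
    IsWeighing 4 ((Real.sqrt 4)⁻¹ • (toR A * (toR B)ᵀ)) := by
  have hBR : toR B * (toR B)ᵀ = (4:ℝ) • 1 := toR_weigh hB
  have hAR : toR A * (toR A)ᵀ = (4:ℝ) • 1 := toR_weigh hA
  have hBtB : (toR B)ᵀ * toR B = (4:ℝ) • 1 := transpose_weigh hBR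
  constructor
  · intro a b
    have : ((Real.sqrt 4)⁻¹ • (toR A * (toR B)ᵀ)) a b
        = (2:ℝ)⁻¹ * ((A * Bᵀ) a b : ℤ) := by
      rw [toR_mulT]
      simp [sqrt4, toR, Matrix.map_apply]
    rw [this]
    rcases hAB a b with h|h|h <;> rw [h] <;> norm_num
  · rw [sqrt4, Matrix.transpose_smul, Matrix.smul_mul, Matrix.mul_smul, smul_smul,
      Matrix.transpose_mul, Matrix.transpose_transpose]
    have hassoc : toR A * (toR B)ᵀ * (toR B * (toR A)ᵀ)
        = toR A * ((toR B)ᵀ * toR B * (toR A)ᵀ) := by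
      simp only [Matrix.mul_assoc]
    rw [hassoc, hBtB, Matrix.smul_mul, Matrix.one_mul, Matrix.mul_smul, hAR,
      smul_smul, smul_smul]
    norm_num

set_option maxRecDepth 10000 in
lemma Wz_entries : ∀ i : Fin 8, ∀ a b : Fin 7,
    Wz i a b = -1 ∨ Wz i a b = 0 ∨ Wz i a b = 1 := by
  intro i a b; fin_cases i <;> fin_cases a <;> fin_cases b <;> decide

set_option maxRecDepth 10000 in
lemma Wz_weigh : ∀ i : Fin 8, Wz i * (Wz i)ᵀ = (4:ℤ) • (1 : Matrix (Fin 7) (Fin 7) ℤ) := by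
  decide

set_option maxRecDepth 100000 in
lemma Wz_cross : ∀ i j : Fin 8, i ≠ j → ∀ a b : Fin 7,
    (Wz i * (Wz j)ᵀ) a b = -2 ∨ (Wz i * (Wz j)ᵀ) a b = 0 ∨ (Wz i * (Wz j)ᵀ) a b = 2 := by
  decide

theorem exists_eight : ∃ W : Fin 8 → Matrix (Fin 7) (Fin 7) ℝ, MUWM (4 : ℝ) W := by
  refine ⟨fun i => toR (Wz i), ?_, ?_⟩
  · intro i
    exact isWeighing_toR (Wz_entries i) (Wz_weigh i)
  · intro i j hij
    exact isWeighing_cross (Wz_weigh i) (Wz_weigh j) (Wz_cross i j hij)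

end StmtAux

/-- the maximum size of a set of mutually unbiased weighing matrices of
order `7` and weight `4` is `8`. -/
theorem stmt16 :
    (∃ W : Fin 8 → Matrix (Fin 7) (Fin 7) ℝ, MUWM (4 : ℝ) W) ∧
    ¬∃ W : Fin 9 → Matrix (Fin 7) (Fin 7) ℝ, MUWM (4 : ℝ) W := by
  exact ⟨exists_eight, no_nine⟩
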